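/- arXiv:2504.00768 — 2 statements merged into one kernel-verified Lean document; each statement's English description precedes it below -/
import Mathlib

section
/- For every integer n ≥ 1, the linear operator Ω_n (defined as in the previous context) has trivial kernel when restricted to polynomials P(ν_b, ν_w) ∈ ℚ[ν_b, ν_w] of total degree at most n that satisfy the symmetry condition P(ν_b, 0) = P(0, ν_b) (as polynomials in one variable). That is, if such a polynomial P satisfies Ω_n(P) = 0, then P = 0. -/
open MvPolynomial

namespace Stmt2


/-- The operator Ω_n := (2/3)(n + 1 + D_w − D_b) ∘ ((ν_w² + ν_b) n
    + ν_w (1 − ν_b ν_w) ∂_b + (1 − ν_b ν_w) ∂_w)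
    − (ν_w (n+1) + (1 − ν_b ν_w) ∂_b) ∘ (ν_w n + (1 − ν_b ν_w) ∂_b),
acting on ℚ[ν_b, ν_w] with ν_b = X 0, ν_w = X 1. -/
noncomputable def Omega (n : ℕ) (P : MvPolynomial (Fin 2) ℚ) : MvPolynomial (Fin 2) ℚ :=
  let νb : MvPolynomial (Fin 2) ℚ := X 0
  let νw : MvPolynomial (Fin 2) ℚ := X 1
  let Q1 := (n : MvPolynomial (Fin 2) ℚ) * ((νw ^ 2 + νb) * P)
      + νw * (1 - νb * νw) * pderiv (0 : Fin 2) P + (1 - νb * νw) * pderiv (1 : Fin 2) P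
  let Q2 := ((n : MvPolynomial (Fin 2) ℚ) + 1) * Q1 + νw * pderiv (1 : Fin 2) Q1
      - νb * pderiv (0 : Fin 2) Q1
  let R1 := (n : MvPolynomial (Fin 2) ℚ) * (νw * P) + (1 - νb * νw) * pderiv (0 : Fin 2) P
  let R2 := ((n : MvPolynomial (Fin 2) ℚ) + 1) * (νw * R1) + (1 - νb * νw) * pderiv (0 : Fin 2) R1
  (2 / 3 : ℚ) • Q2 - R2

-- abbreviations
noncomputable def Bv : MvPolynomial (Fin 2) ℚ := X 0
noncomputable def Wv : MvPolynomial (Fin 2) ℚ := X 1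
noncomputable def U : MvPolynomial (Fin 2) ℚ := 1 - X 0 * X 1

noncomputable def Phi1 (m : ℚ) (F : MvPolynomial (Fin 2) ℚ) : MvPolynomial (Fin 2) ℚ :=
  C m * ((Wv ^ 2 + Bv) * F) + Wv * U * pderiv (0 : Fin 2) F + U * pderiv (1 : Fin 2) F

noncomputable def Phi2 (c : ℚ) (F : MvPolynomial (Fin 2) ℚ) : MvPolynomial (Fin 2) ℚ :=
  C c * F + Wv * pderiv (1 : Fin 2) F - Bv * pderiv (0 : Fin 2) F

noncomputable def Psi (m : ℚ) (F : MvPolynomial (Fin 2) ℚ) : MvPolynomial (Fin 2) ℚ :=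
  C m * (Wv * F) + U * pderiv (0 : Fin 2) F

noncomputable def Br (n : ℕ) (m : ℚ) (F : MvPolynomial (Fin 2) ℚ) : MvPolynomial (Fin 2) ℚ :=
  (2/3 : ℚ) • Phi2 ((n : ℚ) + 1) (Phi1 m F) - Psi (m + 1) (Psi m F)

lemma pderiv0_U : pderiv (0 : Fin 2) U = - X 1 := by
  simp [U, pderiv_mul, pderiv_X_self, pderiv_X_of_ne (by decide : (1:Fin 2) ≠ 0)]
lemma pderiv1_U : pderiv (1 : Fin 2) U = - X 0 := by
  simp [U, pderiv_mul, pderiv_X_self, pderiv_X_of_ne (by decide : (0:Fin 2) ≠ 1)]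

lemma Omega_eq (n : ℕ) (P : MvPolynomial (Fin 2) ℚ) :
    Omega n P = Br n (n : ℚ) P := by
  have hc : (n : MvPolynomial (Fin 2) ℚ) = C (n : ℚ) := by
    simp [MvPolynomial.C_eq_coe_nat]
  simp only [Omega, Br, Phi1, Phi2, Psi, Bv, Wv, U, hc, map_add, map_one]

lemma Phi1_U (m : ℚ) (F : MvPolynomial (Fin 2) ℚ) :
    Phi1 m (U * F) = U * Phi1 (m - 1) F := by
  simp only [Phi1, pderiv_mul, pderiv0_U, pderiv1_U, U, Bv, Wv, map_sub, map_one,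
    pderiv_X_self, pderiv_X_of_ne (by decide : (1:Fin 2) ≠ 0), pderiv_X_of_ne (by decide : (0:Fin 2) ≠ 1), pderiv_one]
  ring

lemma Phi2_U (c : ℚ) (F : MvPolynomial (Fin 2) ℚ) :
    Phi2 c (U * F) = U * Phi2 c F := by
  simp only [Phi2, pderiv_mul, pderiv0_U, pderiv1_U, U, Bv, Wv, map_sub, map_one,
    pderiv_X_self, pderiv_X_of_ne (by decide : (1:Fin 2) ≠ 0), pderiv_X_of_ne (by decide : (0:Fin 2) ≠ 1), pderiv_one]
  ring

lemma Psi_U (m : ℚ) (F : MvPolynomial (Fin 2) ℚ) :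
    Psi m (U * F) = U * Psi (m - 1) F := by
  simp only [Psi, pderiv_mul, pderiv0_U, pderiv1_U, U, Bv, Wv, map_sub, map_one,
    pderiv_X_self, pderiv_X_of_ne (by decide : (1:Fin 2) ≠ 0), pderiv_X_of_ne (by decide : (0:Fin 2) ≠ 1), pderiv_one]
  ring

lemma Omega_pow (n k : ℕ) (Q : MvPolynomial (Fin 2) ℚ) :
    Omega n (U ^ k * Q) = U ^ k * Br n ((n : ℚ) - k) Q := by
  induction k generalizing Q with
  | zero => simpa using Omega_eq n Q
  | succ k ih =>
    have : U ^ (k+1) * Q = U ^ k * (U * Q) := by ring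
    rw [this, ih (U * Q)]
    simp only [Br, Phi1_U, Phi2_U, Psi_U]
    have h1 : (n : ℚ) - k - 1 = (n : ℚ) - (k+1 : ℕ) := by push_cast; ring
    have h2 : (n : ℚ) - k + 1 - 1 = (n : ℚ) - (k+1 : ℕ) + 1 := by push_cast; ring
    rw [h1, h2, pow_succ]
    simp only [mul_sub, mul_smul_comm, mul_assoc]


section Aux
open Polynomial


/-- evaluation of a one-variable polynomial at ν_w -/
noncomputable def ev (g : ℚ[X]) : MvPolynomial (Fin 2) ℚ := Polynomial.aeval Wv g

/-- `g` represents `F` at level `N`: `ν_w^N F ≡ g(ν_w) (mod U)`. -/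
def RepN (N : ℕ) (F : MvPolynomial (Fin 2) ℚ) (g : ℚ[X]) : Prop :=
  ∃ A, Wv ^ N * F = U * A + ev g

noncomputable def Delta (F : MvPolynomial (Fin 2) ℚ) : MvPolynomial (Fin 2) ℚ :=
  Wv * pderiv (1 : Fin 2) F - Bv * pderiv (0 : Fin 2) F

lemma ev_add (g h : ℚ[X]) : ev (g + h) = ev g + ev h := map_add _ _ _
lemma ev_mul (g h : ℚ[X]) : ev (g * h) = ev g * ev h := map_mul _ _ _
lemma ev_X : ev Polynomial.X = Wv := Polynomial.aeval_X _
lemma ev_zero : ev 0 = 0 := map_zero _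

lemma rep_add {N F g F' g'} (h : RepN N F g) (h' : RepN N F' g') :
    RepN N (F + F') (g + g') := by
  obtain ⟨A, hA⟩ := h; obtain ⟨A', hA'⟩ := h'
  exact ⟨A + A', by rw [mul_add, hA, hA', ev_add]; ring⟩

lemma rep_sub {N F g F' g'} (h : RepN N F g) (h' : RepN N F' g') :
    RepN N (F - F') (g - g') := by
  obtain ⟨A, hA⟩ := h; obtain ⟨A', hA'⟩ := h'
  refine ⟨A - A', ?_⟩
  have : ev (g - g') = ev g - ev g' := map_sub _ _ _
  rw [mul_sub, hA, hA', this]; ring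

lemma rep_smul {N F g} (c : ℚ) (h : RepN N F g) : RepN N (c • F) (c • g) := by
  obtain ⟨A, hA⟩ := h
  refine ⟨c • A, ?_⟩
  have : ev (c • g) = c • ev g := map_smul (Polynomial.aeval Wv).toLinearMap _ _
  rw [mul_smul_comm, hA, this, smul_add, mul_smul_comm]

lemma rep_Cmul {N F g} (c : ℚ) (h : RepN N F g) :
    RepN N (MvPolynomial.C c * F) (Polynomial.C c * g) := by
  obtain ⟨A, hA⟩ := h
  refine ⟨MvPolynomial.C c * A, ?_⟩
  have : ev (Polynomial.C c * g) = MvPolynomial.C c * ev g := by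
    rw [ev_mul]; congr 1; exact Polynomial.aeval_C _ _
  rw [show Wv ^ N * (MvPolynomial.C c * F) = MvPolynomial.C c * (Wv ^ N * F) by ring, hA, this]
  ring

lemma rep_W {N F g} (h : RepN N F g) : RepN N (Wv * F) (Polynomial.X * g) := by
  obtain ⟨A, hA⟩ := h
  refine ⟨Wv * A, ?_⟩
  rw [show Wv ^ N * (Wv * F) = Wv * (Wv ^ N * F) by ring, hA, ev_mul, ev_X]
  ring

lemma rep_shift {N F g} (h : RepN N F g) : RepN (N + 1) F (Polynomial.X * g) := by
  obtain ⟨A, hA⟩ := h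
  refine ⟨Wv * A, ?_⟩
  rw [show Wv ^ (N+1) * F = Wv * (Wv ^ N * F) by ring, hA, ev_mul, ev_X]
  ring

lemma rep_B {N F g} (h : RepN N F g) : RepN (N + 1) (Bv * F) g := by
  obtain ⟨A, hA⟩ := h
  refine ⟨A - U * A - ev g, ?_⟩
  have hbw : Bv * Wv = 1 - U := by simp [U, Bv, Wv]
  rw [show Wv ^ (N+1) * (Bv * F) = (Bv * Wv) * (Wv ^ N * F) by ring, hA, hbw]
  ring

lemma rep_U (N : ℕ) (F : MvPolynomial (Fin 2) ℚ) : RepN N (U * F) 0 :=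
  ⟨Wv ^ N * F, by rw [ev_zero]; ring⟩

lemma Delta_add (F G) : Delta (F + G) = Delta F + Delta G := by
  simp only [Delta, map_add]; ring

lemma Delta_Cmul (c : ℚ) (F) : Delta (MvPolynomial.C c * F) = MvPolynomial.C c * Delta F := by
  simp only [Delta, pderiv_mul, pderiv_C]; ring

lemma Delta_W_mul (G) : Delta (Wv * G) = Wv * G + Wv * Delta G := by
  simp only [Delta, Wv, Bv, U, map_sub, map_one, pderiv_mul, pderiv_one, pderiv_X_self,
    pderiv_X_of_ne (by decide : (1:Fin 2) ≠ 0), pderiv_X_of_ne (by decide : (0:Fin 2) ≠ 1)]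
  ring

lemma Delta_U_mul (A) : Delta (U * A) = U * Delta A := by
  simp only [Delta, Wv, Bv, U, map_sub, map_one, pderiv_mul, pderiv_one, pderiv_X_self,
    pderiv_X_of_ne (by decide : (1:Fin 2) ≠ 0), pderiv_X_of_ne (by decide : (0:Fin 2) ≠ 1)]
  ring

lemma Delta_pow_mul (N : ℕ) (F) :
    Delta (Wv ^ N * F) = MvPolynomial.C (N : ℚ) * (Wv ^ N * F) + Wv ^ N * Delta F := by
  induction N with
  | zero => simp
  | succ N ih =>
    rw [show Wv ^ (N+1) * F = Wv * (Wv ^ N * F) by ring, Delta_W_mul, ih]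
    push_cast
    rw [map_add, map_one, pow_succ]
    ring

lemma Delta_ev (g : ℚ[X]) : Delta (ev g) = ev (Polynomial.X * derivative g) := by
  induction g using Polynomial.induction_on' with
  | add p q hp hq =>
    rw [show ev (p + q) = ev p + ev q from map_add _ _ _, Delta_add, hp, hq,
      derivative_add, mul_add, ev_add]
  | monomial d c =>
    have h1 : ev (Polynomial.monomial d c) = MvPolynomial.C c * Wv ^ d := by
      simp [ev, Polynomial.aeval_monomial, MvPolynomial.algebraMap_eq]
    have h2 : Delta (Wv ^ d) = MvPolynomial.C (d : ℚ) * Wv ^ d := by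
      have := Delta_pow_mul d 1
      simpa [Delta] using this
    have h3 : Polynomial.X * derivative (Polynomial.monomial d c)
        = Polynomial.monomial d (c * d) := by
      cases d with
      | zero => simp
      | succ d =>
        rw [derivative_monomial, Polynomial.X_mul_monomial,
          show d + 1 - 1 + 1 = d + 1 from by omega]
    have h4 : ev (Polynomial.monomial d (c * d)) = MvPolynomial.C (c * d) * Wv ^ d := by
      simp [ev, Polynomial.aeval_monomial, MvPolynomial.algebraMap_eq]
    rw [h1, Delta_Cmul, h2, h3, h4, map_mul]
    ring

lemma ev_sub (g h : ℚ[X]) : ev (g - h) = ev g - ev h := map_sub _ _ _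
lemma ev_C (c : ℚ) : ev (Polynomial.C c) = MvPolynomial.C c := Polynomial.aeval_C _ _

lemma rep_Delta {N F g} (h : RepN N F g) :
    RepN N (Delta F) (Polynomial.X * derivative g - Polynomial.C (N : ℚ) * g) := by
  obtain ⟨A, hA⟩ := h
  refine ⟨Delta A - MvPolynomial.C (N:ℚ) * A, ?_⟩
  have hD := congrArg Delta hA
  rw [Delta_pow_mul, Delta_add, Delta_U_mul, Delta_ev, hA] at hD
  rw [ev_sub, show ev (Polynomial.C (N:ℚ) * g) = MvPolynomial.C (N:ℚ) * ev g from by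
    rw [ev_mul, ev_C]]
  have : Wv ^ N * Delta F =
      U * Delta A + ev (Polynomial.X * derivative g)
        - MvPolynomial.C (N:ℚ) * (U * A + ev g) := by
    rw [← hD]; ring
  rw [this]
  ring



lemma rep_congr {N F g F' g'} (hF : F = F') (hg : g = g') (h : RepN N F g) : RepN N F' g' := by
  rw [← hF, ← hg]; exact h

lemma rep_Phi1 {N Q g} (m : ℚ) (h : RepN N Q g) :
    RepN (N + 1) (Phi1 m Q)
      (Polynomial.C m * (Polynomial.X * (Polynomial.X * (Polynomial.X * g))) + Polynomial.C m * g) := by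
  have h1 : RepN (N+1) (MvPolynomial.C m * (Wv * (Wv * Q)))
      (Polynomial.C m * (Polynomial.X * (Polynomial.X * (Polynomial.X * g)))) :=
    rep_Cmul m (rep_shift (rep_W (rep_W h)))
  have h2 : RepN (N+1) (MvPolynomial.C m * (Bv * Q)) (Polynomial.C m * g) :=
    rep_Cmul m (rep_B h)
  have h3 := rep_U (N+1) (Wv * pderiv (0 : Fin 2) Q)
  have h4 := rep_U (N+1) (pderiv (1 : Fin 2) Q)
  refine rep_congr ?_ ?_ (rep_add (rep_add (rep_add h1 h2) h3) h4)
  · simp only [Phi1]; ring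
  · ring

lemma rep_Phi2 {M S s} (c : ℚ) (h : RepN M S s) :
    RepN M (Phi2 c S)
      (Polynomial.C c * s + (Polynomial.X * derivative s - Polynomial.C (M : ℚ) * s)) := by
  refine rep_congr ?_ rfl (rep_add (rep_Cmul c h) (rep_Delta h))
  simp only [Phi2, Delta]; ring

lemma rep_Psi {N Q g} (m : ℚ) (h : RepN N Q g) :
    RepN N (Psi m Q) (Polynomial.C m * (Polynomial.X * g)) := by
  exact rep_congr rfl (add_zero _) (rep_add (rep_Cmul m (rep_W h)) (rep_U N (pderiv (0:Fin 2) Q)))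

/-- canonical form of the image polynomial -/
noncomputable def Ecan (n : ℕ) (m : ℚ) (N : ℕ) (g : ℚ[X]) : ℚ[X] :=
  Polynomial.C (2/3 * m) *
      (Polynomial.C ((n : ℚ) - N) * ((Polynomial.X ^ 3 + 1) * g)
        + Polynomial.X * derivative ((Polynomial.X ^ 3 + 1) * g))
    - Polynomial.C (m * (m + 1)) * (Polynomial.X ^ 3 * g)

lemma rep_Br {N Q g} (n : ℕ) (m : ℚ) (h : RepN N Q g) :
    RepN (N + 1) (Br n m Q) (Ecan n m N g) := by
  have hP2 := rep_Phi2 ((n : ℚ) + 1) (rep_Phi1 m h)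
  have hPsi := rep_shift (rep_Psi (m + 1) (rep_Psi m h))
  refine rep_congr rfl ?_ (rep_sub (rep_smul (2/3 : ℚ) hP2) hPsi)
  simp only [Ecan, derivative_mul, derivative_add, derivative_one, derivative_X_pow,
    derivative_X, derivative_C, Polynomial.smul_eq_C_mul]
  push_cast
  simp only [map_add, map_sub, map_mul, map_one, map_div₀, map_ofNat]
  ring



open LaurentPolynomial in
noncomputable def phi : MvPolynomial (Fin 2) ℚ →ₐ[ℚ] LaurentPolynomial ℚ :=
  MvPolynomial.aeval ![LaurentPolynomial.T (-1), LaurentPolynomial.T 1]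

open LaurentPolynomial in
lemma phi_U : phi U = 0 := by
  simp only [phi, U, map_sub, map_one, map_mul, MvPolynomial.aeval_X]
  rw [show (![LaurentPolynomial.T (-1), LaurentPolynomial.T 1] : Fin 2 → LaurentPolynomial ℚ) 0
      = LaurentPolynomial.T (-1) from rfl,
    show (![LaurentPolynomial.T (-1), LaurentPolynomial.T 1] : Fin 2 → LaurentPolynomial ℚ) 1
      = LaurentPolynomial.T 1 from rfl, ← LaurentPolynomial.T_add]
  norm_num [LaurentPolynomial.T_zero]

lemma phi_ev (g : ℚ[X]) : phi (ev g) = Polynomial.toLaurent g := by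
  have : phi.comp (Polynomial.aeval Wv) = Polynomial.toLaurentAlg (R := ℚ) := by
    apply Polynomial.algHom_ext
    simp only [AlgHom.comp_apply, Polynomial.aeval_X, Polynomial.toLaurentAlg_apply,
      Polynomial.toLaurent_X]
    simp [phi, Wv]
  have h := congrArg (fun f => f g) this
  simpa [ev, Polynomial.toLaurentAlg_apply] using h

lemma eq_zero_of_U_dvd_ev {g : ℚ[X]} (h : U ∣ ev g) : g = 0 := by
  obtain ⟨A, hA⟩ := h
  have : Polynomial.toLaurent g = 0 := by
    rw [← phi_ev, hA, map_mul, phi_U, zero_mul]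
  exact Polynomial.toLaurent_injective (by simpa using this)

lemma rep_zero_unique {N g} (h : RepN N 0 g) : g = 0 := by
  obtain ⟨A, hA⟩ := h
  apply eq_zero_of_U_dvd_ev
  exact ⟨-A, by linear_combination -hA⟩

lemma U_dvd_of_U_dvd_W_mul {F : MvPolynomial (Fin 2) ℚ} (h : U ∣ Wv * F) : U ∣ F := by
  obtain ⟨A, hA⟩ := h
  refine ⟨F + Bv * A, ?_⟩
  have h2 : Bv * (Wv * F) = Bv * (U * A) := by rw [hA]
  simp only [U, Bv, Wv] at h2 ⊢
  linear_combination h2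
lemma U_dvd_of_U_dvd_Wpow_mul {F : MvPolynomial (Fin 2) ℚ} (N : ℕ) (h : U ∣ Wv ^ N * F) :
    U ∣ F := by
  induction N with
  | zero => simpa using h
  | succ N ih =>
    apply ih
    apply U_dvd_of_U_dvd_W_mul
    rw [show Wv * (Wv ^ N * F) = Wv ^ (N+1) * F by ring]
    exact h

lemma U_dvd_of_rep_zero {N F} (h : RepN N F 0) : U ∣ F := by
  obtain ⟨A, hA⟩ := h
  apply U_dvd_of_U_dvd_Wpow_mul N
  rw [hA]
  simp only [ev, map_zero, add_zero]
  exact Dvd.intro _ rfl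

/-- explicit representative for a monomial -/
lemma rep_monomial (N : ℕ) (s : Fin 2 →₀ ℕ) (c : ℚ) (hs : s 0 ≤ N) :
    RepN N (MvPolynomial.monomial s c) (Polynomial.monomial (N + s 1 - s 0) c) := by
  have hmon : (MvPolynomial.monomial s c : MvPolynomial (Fin 2) ℚ)
      = MvPolynomial.C c * Bv ^ (s 0) * Wv ^ (s 1) := by
    rw [MvPolynomial.monomial_eq]
    rw [Finsupp.prod_fintype _ _ (fun i => pow_zero _)]
    rw [Fin.prod_univ_two]
    rw [mul_assoc]
    rfl
  have hev : ev (Polynomial.monomial (N + s 1 - s 0) c)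
      = MvPolynomial.C c * Wv ^ (N + s 1 - s 0) := by
    simp [ev, Polynomial.aeval_monomial, MvPolynomial.algebraMap_eq]
  obtain ⟨D, hD⟩ : (1 - Bv * Wv) ∣ (1 - (Bv * Wv) ^ (s 0)) := by
    simpa using sub_dvd_pow_sub_pow 1 (Bv * Wv) (s 0)
  refine ⟨- (MvPolynomial.C c * Wv ^ (N + s 1 - s 0) * D), ?_⟩
  have hU : U = 1 - Bv * Wv := by simp [U, Bv, Wv]
  rw [hmon, hev, hU]
  have hexp : Wv ^ N * (MvPolynomial.C c * Bv ^ (s 0) * Wv ^ (s 1))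
      = MvPolynomial.C c * Wv ^ (N + s 1 - s 0) * (Bv * Wv) ^ (s 0) := by
    rw [mul_pow]
    have : N + s 1 - s 0 + s 0 = N + s 1 := by omega
    rw [show MvPolynomial.C c * Wv ^ (N + s 1 - s 0) * (Bv ^ (s 0) * Wv ^ (s 0))
        = MvPolynomial.C c * Bv ^ (s 0) * (Wv ^ (N + s 1 - s 0) * Wv ^ (s 0)) by ring,
      ← pow_add, this, pow_add]
    ring
  rw [hexp]
  linear_combination (-(MvPolynomial.C c * Wv ^ (N + s 1 - s 0))) * hD

lemma rep_sum {ι : Type*} (t : Finset ι) (N : ℕ) (F : ι → MvPolynomial (Fin 2) ℚ)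
    (g : ι → ℚ[X]) (h : ∀ i ∈ t, RepN N (F i) (g i)) :
    RepN N (∑ i ∈ t, F i) (∑ i ∈ t, g i) := by
  classical
  induction t using Finset.induction_on with
  | empty => exact ⟨0, by simp [ev]⟩
  | insert a tt hx ih =>
    rw [Finset.sum_insert hx, Finset.sum_insert hx]
    obtain ⟨A, hA⟩ := h a (Finset.mem_insert_self a tt)
    obtain ⟨A', hA'⟩ := ih (fun i hi => h i (Finset.mem_insert_of_mem hi))
    exact ⟨A + A', by rw [mul_add, hA, hA', show ev (g a + ∑ i ∈ tt, g i)
      = ev (g a) + ev (∑ i ∈ tt, g i) from map_add _ _ _]; ring⟩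

lemma sum_fin2 (s : Fin 2 →₀ ℕ) : s.sum (fun _ e => e) = s 0 + s 1 := by
  rw [Finsupp.sum_fintype _ _ (fun i => rfl), Fin.sum_univ_two]

/-- the canonical representative of `Q` at level `totalDegree Q` -/
noncomputable def gcan (Q : MvPolynomial (Fin 2) ℚ) : ℚ[X] :=
  ∑ s ∈ Q.support, Polynomial.monomial (Q.totalDegree + s 1 - s 0) (MvPolynomial.coeff s Q)

lemma rep_gcan (Q : MvPolynomial (Fin 2) ℚ) : RepN Q.totalDegree Q (gcan Q) := by
  have h := rep_sum Q.support Q.totalDegree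
    (fun s => MvPolynomial.monomial s (MvPolynomial.coeff s Q))
    (fun s => Polynomial.monomial (Q.totalDegree + s 1 - s 0) (MvPolynomial.coeff s Q))
    (fun s hs => rep_monomial _ s _ (by
      have := MvPolynomial.le_totalDegree hs
      rw [sum_fin2] at this
      omega))
  rw [← MvPolynomial.as_sum] at h
  exact h



lemma U_ne_zero : U ≠ 0 := by
  intro h
  have := congrArg MvPolynomial.constantCoeff h
  simp [U] at this

lemma totalDegree_U_mul {G : MvPolynomial (Fin 2) ℚ} (hG : G ≠ 0) :
    G.totalDegree + 2 ≤ (U * G).totalDegree := by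
  classical
  obtain ⟨s, hs, hsup⟩ := Finset.exists_mem_eq_sup G.support
    (MvPolynomial.support_nonempty.mpr hG) (fun s => s.sum fun _ e => e)
  set t : Fin 2 →₀ ℕ := s + Finsupp.single 0 1 + Finsupp.single 1 1 with ht
  have htsum : t.sum (fun _ e => e) = G.totalDegree + 2 := by
    rw [sum_fin2]
    have h0 : t 0 = s 0 + 1 := by simp [ht, Finsupp.single_apply]
    have h1 : t 1 = s 1 + 1 := by simp [ht, Finsupp.single_apply]
    rw [h0, h1]
    have : G.totalDegree = s.sum fun _ e => e := hsup
    rw [this, sum_fin2]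
    omega
  have hcoefft : MvPolynomial.coeff t (U * G) = - MvPolynomial.coeff s G := by
    have hUG : U * G = G - G * MvPolynomial.X 0 * MvPolynomial.X 1 := by
      simp only [U]; ring
    rw [hUG]
    rw [MvPolynomial.coeff_sub]
    have e1 : MvPolynomial.coeff t (G * MvPolynomial.X 0 * MvPolynomial.X 1)
        = MvPolynomial.coeff s G := by
      rw [ht, MvPolynomial.coeff_mul_X, MvPolynomial.coeff_mul_X]
    have e2 : MvPolynomial.coeff t G = 0 := by
      apply MvPolynomial.coeff_eq_zero_of_totalDegree_lt
      have hh : (∑ i ∈ t.support, t i) = t.sum fun _ e => e := rfl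
      rw [hh, htsum]; omega
    rw [e1, e2]; ring
  have hmem : t ∈ (U * G).support := by
    rw [MvPolynomial.mem_support_iff, hcoefft]
    simpa [MvPolynomial.mem_support_iff] using hs
  have := MvPolynomial.le_totalDegree hmem
  rw [htsum] at this
  exact this

lemma totalDegree_U_pow_mul (k : ℕ) (Q : MvPolynomial (Fin 2) ℚ) (hQ : Q ≠ 0) :
    2 * k + Q.totalDegree ≤ (U ^ k * Q).totalDegree := by
  induction k generalizing Q with
  | zero => simpa using le_refl _
  | succ k ih =>
    have hUQ : U * Q ≠ 0 := mul_ne_zero U_ne_zero hQ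
    have h2 := totalDegree_U_mul hQ
    have h3 : (U ^ (k+1) * Q) = U ^ k * (U * Q) := by ring
    rw [h3]
    have h4 := ih (U * Q) hUQ
    omega



lemma finsupp_eq_single0 (s : Fin 2 →₀ ℕ) (N : ℕ) (h0 : s 0 = N) (h1 : s 1 = 0) :
    s = Finsupp.single 0 N := by
  ext i
  fin_cases i <;> simp [Finsupp.single_apply, h0, h1]

lemma finsupp_eq_single1 (s : Fin 2 →₀ ℕ) (N : ℕ) (h0 : s 0 = 0) (h1 : s 1 = N) :
    s = Finsupp.single 1 N := by
  ext i
  fin_cases i <;> simp [Finsupp.single_apply, h0, h1]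

lemma gcan_coeff (Q : MvPolynomial (Fin 2) ℚ) (e : ℕ) (sstar : Fin 2 →₀ ℕ)
    (hstar : Q.totalDegree + sstar 1 - sstar 0 = e)
    (huniq : ∀ s ∈ Q.support, Q.totalDegree + s 1 - s 0 = e → s = sstar) :
    (gcan Q).coeff e = MvPolynomial.coeff sstar Q := by
  classical
  rw [gcan, Polynomial.finset_sum_coeff]
  rw [Finset.sum_congr rfl (fun s _ => Polynomial.coeff_monomial)]
  rw [Finset.sum_eq_single sstar]
  · rw [if_pos hstar]
  · intro s hs hne
    rw [if_neg]
    intro hc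
    exact hne (huniq s hs hc)
  · intro hns
    rw [if_pos hstar]
    exact (MvPolynomial.notMem_support_iff.mp hns)

lemma gcan_coeff_zero (Q : MvPolynomial (Fin 2) ℚ) :
    (gcan Q).coeff 0 = MvPolynomial.coeff (Finsupp.single 0 Q.totalDegree) Q := by
  apply gcan_coeff
  · simp [Finsupp.single_apply]
  · intro s hs hc
    have hb := MvPolynomial.le_totalDegree hs
    rw [sum_fin2] at hb
    apply finsupp_eq_single0 <;> omega

lemma gcan_coeff_high (Q : MvPolynomial (Fin 2) ℚ) :
    (gcan Q).coeff (2 * Q.totalDegree)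
      = MvPolynomial.coeff (Finsupp.single 1 Q.totalDegree) Q := by
  apply gcan_coeff
  · simp [Finsupp.single_apply]; omega
  · intro s hs hc
    have hb := MvPolynomial.le_totalDegree hs
    rw [sum_fin2] at hb
    apply finsupp_eq_single1 <;> omega

lemma aeval_coeff_b (P : MvPolynomial (Fin 2) ℚ) (d : ℕ) :
    (MvPolynomial.aeval ![Polynomial.X, (0 : ℚ[X])] P).coeff d
      = MvPolynomial.coeff (Finsupp.single 0 d) P := by
  classical
  conv_lhs => rw [MvPolynomial.as_sum P]
  rw [map_sum, Polynomial.finset_sum_coeff]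
  have hterm : ∀ s : Fin 2 →₀ ℕ,
      ((MvPolynomial.aeval ![Polynomial.X, (0 : ℚ[X])]
        (MvPolynomial.monomial s (MvPolynomial.coeff s P))).coeff d)
      = if s = Finsupp.single 0 d then MvPolynomial.coeff s P else 0 := by
    intro s
    rw [MvPolynomial.aeval_monomial]
    rw [Finsupp.prod_fintype _ _ (fun i => pow_zero _), Fin.prod_univ_two]
    rw [show (![Polynomial.X, (0 : ℚ[X])] : Fin 2 → ℚ[X]) 0 = Polynomial.X from rfl,
      show (![Polynomial.X, (0 : ℚ[X])] : Fin 2 → ℚ[X]) 1 = 0 from rfl]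
    by_cases h1 : s 1 = 0
    · rw [h1, pow_zero, mul_one]
      have : algebraMap ℚ ℚ[X] (MvPolynomial.coeff s P) = Polynomial.C (MvPolynomial.coeff s P) := rfl
      rw [this, Polynomial.coeff_C_mul, Polynomial.coeff_X_pow]
      by_cases h0 : s 0 = d
      · rw [if_pos h0.symm, if_pos (finsupp_eq_single0 s d h0 h1)]
        ring
      · rw [if_neg (fun hc => h0 hc.symm),
          if_neg (fun hc => h0 (by rw [hc]; simp [Finsupp.single_apply]))]
        ring
    · rw [zero_pow h1]
      rw [if_neg (fun hc => h1 (by rw [hc]; simp [Finsupp.single_apply]))]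
      simp
  rw [Finset.sum_congr rfl (fun s _ => hterm s)]
  rw [Finset.sum_eq_single (Finsupp.single 0 d)]
  · rw [if_pos rfl]
  · intro s hs hne; rw [if_neg hne]
  · intro hns
    rw [if_pos rfl]
    exact MvPolynomial.notMem_support_iff.mp hns

lemma aeval_coeff_w (P : MvPolynomial (Fin 2) ℚ) (d : ℕ) :
    (MvPolynomial.aeval ![(0 : ℚ[X]), Polynomial.X] P).coeff d
      = MvPolynomial.coeff (Finsupp.single 1 d) P := by
  classical
  conv_lhs => rw [MvPolynomial.as_sum P]
  rw [map_sum, Polynomial.finset_sum_coeff]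
  have hterm : ∀ s : Fin 2 →₀ ℕ,
      ((MvPolynomial.aeval ![(0 : ℚ[X]), Polynomial.X]
        (MvPolynomial.monomial s (MvPolynomial.coeff s P))).coeff d)
      = if s = Finsupp.single 1 d then MvPolynomial.coeff s P else 0 := by
    intro s
    rw [MvPolynomial.aeval_monomial]
    rw [Finsupp.prod_fintype _ _ (fun i => pow_zero _), Fin.prod_univ_two]
    rw [show (![(0 : ℚ[X]), Polynomial.X] : Fin 2 → ℚ[X]) 0 = 0 from rfl,
      show (![(0 : ℚ[X]), Polynomial.X] : Fin 2 → ℚ[X]) 1 = Polynomial.X from rfl]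
    by_cases h0 : s 0 = 0
    · rw [h0, pow_zero, one_mul]
      have : algebraMap ℚ ℚ[X] (MvPolynomial.coeff s P) = Polynomial.C (MvPolynomial.coeff s P) := rfl
      rw [this, Polynomial.coeff_C_mul, Polynomial.coeff_X_pow]
      by_cases h1 : s 1 = d
      · rw [if_pos h1.symm, if_pos (finsupp_eq_single1 s d h0 h1)]
        ring
      · rw [if_neg (fun hc => h1 hc.symm),
          if_neg (fun hc => h1 (by rw [hc]; simp [Finsupp.single_apply]))]
        ring
    · rw [zero_pow h0]
      rw [if_neg (fun hc => h0 (by rw [hc]; simp [Finsupp.single_apply]))]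
      simp
  rw [Finset.sum_congr rfl (fun s _ => hterm s)]
  rw [Finset.sum_eq_single (Finsupp.single 1 d)]
  · rw [if_pos rfl]
  · intro s hs hne; rw [if_neg hne]
  · intro hns
    rw [if_pos rfl]
    exact MvPolynomial.notMem_support_iff.mp hns



lemma coeff_X_mul_derivative (h : ℚ[X]) (j : ℕ) :
    (Polynomial.X * derivative h).coeff j = j * h.coeff j := by
  cases j with
  | zero =>
    rw [Polynomial.mul_coeff_zero]
    simp
  | succ j =>
    rw [Polynomial.coeff_X_mul, Polynomial.coeff_derivative]
    push_cast
    ring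

lemma coeff_X3_mul (g : ℚ[X]) (j : ℕ) :
    (Polynomial.X ^ 3 * g).coeff j = if 3 ≤ j then g.coeff (j - 3) else 0 := by
  rw [show Polynomial.X ^ 3 * g = g * Polynomial.X ^ 3 from mul_comm _ _,
    Polynomial.coeff_mul_X_pow']

lemma Ecan_coeff (n : ℕ) (m : ℚ) (N : ℕ) (g : ℚ[X]) (hE : Ecan n m N g = 0) (j : ℕ) :
    (2/3 * m) * (((n : ℚ) - N + j) * ((Polynomial.X ^ 3 * g).coeff j + g.coeff j))
      - m * (m + 1) * (Polynomial.X ^ 3 * g).coeff j = 0 := by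
  have h := congrArg (fun p => Polynomial.coeff p j) hE
  simp only [Ecan, Polynomial.coeff_sub, Polynomial.coeff_add, Polynomial.coeff_C_mul,
    Polynomial.coeff_zero] at h
  rw [show (Polynomial.X ^ 3 + 1) * g = Polynomial.X ^ 3 * g + g by ring] at h
  rw [derivative_add] at h
  rw [show Polynomial.X * (derivative (Polynomial.X ^ 3 * g) + derivative g)
      = Polynomial.X * derivative (Polynomial.X ^ 3 * g) + Polynomial.X * derivative g by ring] at h
  simp only [Polynomial.coeff_add, coeff_X_mul_derivative] at h
  linear_combination h

lemma Ecan_trailing (n : ℕ) (m : ℚ) (N : ℕ) (g : ℚ[X]) (hE : Ecan n m N g = 0)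
    (hm : m ≠ 0) (hg : g ≠ 0) :
    ((n : ℚ) - N + g.natTrailingDegree) = 0 := by
  set v := g.natTrailingDegree with hv
  have h3 : (Polynomial.X ^ 3 * g).coeff v = 0 := by
    rw [coeff_X3_mul]
    by_cases hc : 3 ≤ v
    · rw [if_pos hc]
      exact Polynomial.coeff_eq_zero_of_lt_natTrailingDegree (by omega)
    · rw [if_neg hc]
  have h := Ecan_coeff n m N g hE v
  rw [h3] at h
  have hgv : g.coeff v ≠ 0 := by
    rw [hv]
    exact Polynomial.trailingCoeff_nonzero_iff_nonzero.mpr hg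
  have h23 : (2/3 : ℚ) * m ≠ 0 := mul_ne_zero (by norm_num) hm
  have := mul_eq_zero.mp (by linear_combination h :
    ((2/3 * m) * (((n : ℚ) - N + v))) * g.coeff v = 0)
  rcases this with h' | h'
  · rcases mul_eq_zero.mp h' with h'' | h''
    · exact absurd h'' h23
    · exact h''
  · exact absurd h' hgv

lemma Ecan_leading (n : ℕ) (m : ℚ) (N : ℕ) (g : ℚ[X]) (hE : Ecan n m N g = 0)
    (hm : m ≠ 0) (hg : g ≠ 0) :
    ((n : ℚ) - N + g.natDegree + 3) = 3/2 * (m + 1) := by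
  set D := g.natDegree with hD
  have h3 : (Polynomial.X ^ 3 * g).coeff (D + 3) = g.coeff D := by
    rw [coeff_X3_mul, if_pos (by omega)]
    norm_num
  have h0 : g.coeff (D + 3) = 0 :=
    Polynomial.coeff_eq_zero_of_natDegree_lt (by omega)
  have h := Ecan_coeff n m N g hE (D + 3)
  rw [h3, h0] at h
  have hgD : g.coeff D ≠ 0 := by
    rw [hD]
    exact Polynomial.leadingCoeff_ne_zero.mpr hg
  have hfac : (2/3 * m) * (((n : ℚ) - N + (D + 3)) - 3/2 * (m+1)) * g.coeff D = 0 := by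
    push_cast at h ⊢
    linear_combination h
  have h23 : (2/3 : ℚ) * m ≠ 0 := mul_ne_zero (by norm_num) hm
  rcases mul_eq_zero.mp hfac with h' | h'
  · rcases mul_eq_zero.mp h' with h'' | h''
    · exact absurd h'' h23
    · push_cast
      linear_combination h''
  · exact absurd h' hgD


end Aux

/-- for n ≥ 1, Ω_n has trivial kernel on polynomials of total degree
at most n satisfying the symmetry condition P(ν_b, 0) = P(0, ν_b). -/
theorem stmt_2 (n : ℕ) (hn : 1 ≤ n) (P : MvPolynomial (Fin 2) ℚ)
    (hdeg : P.totalDegree ≤ n)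
    (hsym : aeval ![Polynomial.X, 0] P = aeval ![(0 : Polynomial ℚ), Polynomial.X] P)
    (h0 : Omega n P = 0) : P = 0 := by
  by_contra hP
  have key : ∀ k, U ^ k ∣ P := by
    intro k
    induction k with
    | zero => simp
    | succ k ih =>
      obtain ⟨Q, hQ⟩ := ih
      have hQne : Q ≠ 0 := fun h => hP (by rw [hQ, h, mul_zero])
      have hdegQ : 2 * k + Q.totalDegree ≤ n := by
        have h1 := totalDegree_U_pow_mul k Q hQne
        rw [← hQ] at h1
        omega
      have hkn : k < n := by omega
      have hBr : Br n ((n:ℚ) - k) Q = 0 := by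
        have h1 : U ^ k * Br n ((n:ℚ) - k) Q = 0 := by rw [← Omega_pow, ← hQ, h0]
        exact (mul_eq_zero.mp h1).resolve_left (pow_ne_zero k U_ne_zero)
      have hrep : RepN Q.totalDegree Q (gcan Q) := rep_gcan Q
      have hrepBr : RepN (Q.totalDegree + 1) (Br n ((n:ℚ)-k) Q)
          (Ecan n ((n:ℚ)-k) Q.totalDegree (gcan Q)) := rep_Br n _ hrep
      rw [hBr] at hrepBr
      have hE : Ecan n ((n:ℚ)-k) Q.totalDegree (gcan Q) = 0 := rep_zero_unique hrepBr
      have hm : ((n:ℚ) - k) ≠ 0 := by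
        have h1 : (k:ℚ) < n := by exact_mod_cast hkn
        intro hc; linarith
      have hg0 : gcan Q = 0 := by
        by_contra hgne
        have htr := Ecan_trailing n _ _ _ hE hm hgne
        have hNn : Q.totalDegree = n + (gcan Q).natTrailingDegree := by
          have h1 : (Q.totalDegree : ℚ) = n + (gcan Q).natTrailingDegree := by linarith
          exact_mod_cast h1
        rcases Nat.eq_zero_or_pos k with hk0 | hkpos
        · -- k = 0 : the symmetric / parity argument
          subst hk0
          have hQP : Q = P := by simpa using hQ.symm
          have hNQn : Q.totalDegree = n := by omega
          have hv0 : (gcan Q).natTrailingDegree = 0 := by omega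
          have hlead := Ecan_leading n _ _ _ hE hm hgne
          rw [hNQn] at hlead
          have h2D : (2 * (gcan Q).natDegree + 6 : ℚ) = 3 * n + 3 := by
            push_cast at hlead ⊢
            linarith
          have h2Dn : 2 * (gcan Q).natDegree + 6 = 3 * n + 3 := by exact_mod_cast h2D
          rcases Nat.even_or_odd n with he | ho
          · obtain ⟨t, ht⟩ := he
            omega
          · -- n odd: use the symmetry condition
            have hc0 : (gcan Q).coeff 0 = MvPolynomial.coeff (Finsupp.single 0 n) P := by
              rw [gcan_coeff_zero, hNQn, hQP]
            have hc2n : (gcan Q).coeff (2 * n) = MvPolynomial.coeff (Finsupp.single 1 n) P := by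
              rw [← hNQn, gcan_coeff_high, hQP]
            have hsymc : MvPolynomial.coeff (Finsupp.single 0 n) P
                = MvPolynomial.coeff (Finsupp.single 1 n) P := by
              rw [← aeval_coeff_b P n, ← aeval_coeff_w P n, hsym]
            have hD2n : (gcan Q).natDegree < 2 * n := by omega
            have hz : (gcan Q).coeff (2 * n) = 0 :=
              Polynomial.coeff_eq_zero_of_natDegree_lt hD2n
            have hnz : (gcan Q).coeff 0 ≠ 0 := by
              rw [show (0:ℕ) = (gcan Q).natTrailingDegree from hv0.symm]
              exact Polynomial.trailingCoeff_nonzero_iff_nonzero.mpr hgne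
            apply hnz
            rw [hc0, hsymc, ← hc2n, hz]
        · omega
      rw [hg0] at hrep
      obtain ⟨R, hR⟩ := U_dvd_of_rep_zero hrep
      exact ⟨R, by rw [hQ, hR]; ring⟩
  obtain ⟨Q, hQ⟩ := key (n + 1)
  have hQne : Q ≠ 0 := fun h => hP (by rw [hQ, h, mul_zero])
  have h1 := totalDegree_U_pow_mul (n+1) Q hQne
  rw [← hQ] at h1
  omega

end Stmt2
end

section
/- Let D_t = t ∂/∂t, D_b = ν_b ∂/∂ν_b, D_w = ν_w ∂/∂ν_w, ∂_b = ∂/∂ν_b, ∂_w = ∂/∂ν_w, and let Λ := 2t²((ν_w² + ν_b) D_t + ν_w (1 − ν_b ν_w) ∂_b + (1 − ν_b ν_w) ∂_w). With 𝔸 and ⪰ as above, for every integer k ≥ 1 one has Λ^k ⪰ 2^k t^{2k} ( Σ_{j=0}^{k} C(k,j) ν_w^{2j} ν_b^{k−j} (D_t − D_b)^j (D_t − D_w)^{k−j} ) ⪰ 0, where C(k,j) is the binomial coefficient. -/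
namespace Stmt6

/-- Formal power series in t, s, ν_b, ν_w with real coefficients
(variable 0 = t, 1 = s, 2 = ν_b, 3 = ν_w). -/
abbrev R4 : Type := MvPowerSeries (Fin 4) ℝ

noncomputable def T : R4 := MvPowerSeries.X 0
noncomputable def B : R4 := MvPowerSeries.X 2
noncomputable def W : R4 := MvPowerSeries.X 3

/-- D_t = t ∂/∂t. -/
noncomputable def Dt (f : R4) : R4 := fun d => (d 0 : ℝ) * f d
/-- D_b = ν_b ∂/∂ν_b. -/
noncomputable def Db (f : R4) : R4 := fun d => (d 2 : ℝ) * f d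
/-- D_w = ν_w ∂/∂ν_w. -/
noncomputable def Dw (f : R4) : R4 := fun d => (d 3 : ℝ) * f d
/-- ∂/∂ν_b. -/
noncomputable def pb (f : R4) : R4 := fun d => ((d 2 : ℕ) + 1 : ℝ) * f (d + Finsupp.single 2 1)
/-- ∂/∂ν_w. -/
noncomputable def pw (f : R4) : R4 := fun d => ((d 3 : ℕ) + 1 : ℝ) * f (d + Finsupp.single 3 1)

/-- Λ := 2t²((ν_w² + ν_b) D_t + ν_w (1 − ν_b ν_w) ∂_b + (1 − ν_b ν_w) ∂_w). -/
noncomputable def Lam (f : R4) : R4 :=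
  2 * T ^ 2 * ((W ^ 2 + B) * Dt f + W * (1 - B * W) * pb f + (1 - B * W) * pw f)

noncomputable def DtDb (f : R4) : R4 := Dt f - Db f
noncomputable def DtDw (f : R4) : R4 := Dt f - Dw f

/-- The operator 2^k t^{2k} Σ_{j=0}^{k} C(k,j) ν_w^{2j} ν_b^{k−j} (D_t−D_b)^j (D_t−D_w)^{k−j}. -/
noncomputable def Theta (k : ℕ) (f : R4) : R4 :=
  (2 ^ k : ℝ) • (T ^ (2 * k) *
    ∑ j ∈ Finset.range (k + 1),
      (Nat.choose k j : ℝ) • (W ^ (2 * j) * B ^ (k - j) * (DtDb^[j] (DtDw^[k - j] f))))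

/-- The semiring 𝔸: series with nonnegative coefficients supported on monomials
t^m s^g ν_b^a ν_w^b with m ≥ a + b.  Φ ⪰ Ψ means (Φ−Ψ)(𝔸) ⊆ 𝔸. -/
def A : Set R4 :=
  {f | ∀ d : Fin 4 →₀ ℕ, 0 ≤ MvPowerSeries.coeff d f ∧
    (MvPowerSeries.coeff d f ≠ 0 → d 2 + d 3 ≤ d 0)}

/-! ### auxiliary operators -/

/-- Multiplication by the monomial with exponent `e`, described pointwise. -/
noncomputable def mm (e : Fin 4 →₀ ℕ) (f : R4) : R4 :=
  fun d => if e ≤ d then f (d - e) else 0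

/-- Diagonal operator multiplying the coefficient at `d` by `c d`. -/
noncomputable def dg (c : (Fin 4 →₀ ℕ) → ℝ) (f : R4) : R4 := fun d => c d * f d

/-- Exponent of the monomial `t^{2k} ν_w^{2j} ν_b^{k-j}`. -/
noncomputable def E (k j : ℕ) : Fin 4 →₀ ℕ :=
  Finsupp.single 0 (2*k) + (Finsupp.single 3 (2*j) + Finsupp.single 2 (k-j))

/-- The eigenvalue function of `(D_t-D_b)^j (D_t-D_w)^{k-j}`. -/
noncomputable def P (k j : ℕ) : (Fin 4 →₀ ℕ) → ℝ :=
  fun d => ((d 0 : ℝ) - d 2) ^ j * ((d 0 : ℝ) - d 3) ^ (k - j)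

lemma mono_mul (e : Fin 4 →₀ ℕ) (f : R4) :
    MvPowerSeries.monomial e (1:ℝ) * f = mm e f := by
  ext d
  rw [MvPowerSeries.coeff_monomial_mul]
  simp only [MvPowerSeries.coeff_apply, mm, one_mul]

lemma X_pow_mul (i : Fin 4) (n : ℕ) (f : R4) :
    (MvPowerSeries.X i : R4) ^ n * f = mm (Finsupp.single i n) f := by
  rw [MvPowerSeries.X_pow_eq, mono_mul]

lemma X_mul (i : Fin 4) (f : R4) :
    (MvPowerSeries.X i : R4) * f = mm (Finsupp.single i 1) f := by
  rw [← pow_one (MvPowerSeries.X i : R4), X_pow_mul]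

lemma mm_mm (e e' : Fin 4 →₀ ℕ) (f : R4) : mm e (mm e' f) = mm (e + e') f := by
  funext d
  simp only [mm]
  by_cases h : e + e' ≤ d
  · have h1 : e ≤ d := by
      rw [Finsupp.le_def] at h ⊢
      intro i; have := h i; simp only [Finsupp.add_apply] at this; omega
    have h2 : e' ≤ d - e := by
      rw [Finsupp.le_def] at h ⊢
      intro i; have := h i
      simp only [Finsupp.add_apply] at this
      rw [Finsupp.tsub_apply]; omega
    rw [if_pos h, if_pos h1, if_pos h2]
    congr 1
    ext i
    simp only [Finsupp.tsub_apply, Finsupp.add_apply]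
    omega
  · rw [if_neg h]
    by_cases h1 : e ≤ d
    · rw [if_pos h1]
      have h2 : ¬ e' ≤ d - e := by
        intro h2
        apply h
        rw [Finsupp.le_def] at h1 h2 ⊢
        intro i
        have := h1 i; have := h2 i
        rw [Finsupp.tsub_apply] at *
        simp only [Finsupp.add_apply]
        omega
      rw [if_neg h2]
    · rw [if_neg h1]

lemma mm_add (e : Fin 4 →₀ ℕ) (f g : R4) : mm e (f + g) = mm e f + mm e g := by
  funext d
  show (if e ≤ d then (f + g) (d-e) else 0)
    = (if e ≤ d then f (d-e) else 0) + (if e ≤ d then g (d-e) else 0)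
  split_ifs with h
  · rfl
  · simp

lemma mm_smul (e : Fin 4 →₀ ℕ) (c : ℝ) (f : R4) : mm e (c • f) = c • mm e f := by
  funext d
  show (if e ≤ d then (c • f) (d-e) else 0) = c * (if e ≤ d then f (d-e) else 0)
  split_ifs with h
  · rfl
  · simp

lemma mm_sum {ι : Type*} (s : Finset ι) (g : ι → R4) (e : Fin 4 →₀ ℕ) :
    mm e (∑ i ∈ s, g i) = ∑ i ∈ s, mm e (g i) := by
  funext d
  rw [show (∑ i ∈ s, mm e (g i)) d = ∑ i ∈ s, mm e (g i) d from Finset.sum_apply _ _ _]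
  show (if e ≤ d then (∑ i ∈ s, g i) (d - e) else 0) = ∑ i ∈ s, mm e (g i) d
  rw [show (∑ i ∈ s, g i) (d - e) = ∑ i ∈ s, g i (d - e) from Finset.sum_apply _ _ _]
  split_ifs with h
  · exact Finset.sum_congr rfl fun i _ => (if_pos h).symm
  · exact (Finset.sum_eq_zero fun i _ => if_neg h).symm

lemma dg_add (c : (Fin 4 →₀ ℕ) → ℝ) (f g : R4) : dg c (f + g) = dg c f + dg c g := by
  funext d; show c d * (f d + g d) = c d * f d + c d * g d; ring

lemma dg_smul (c : (Fin 4 →₀ ℕ) → ℝ) (r : ℝ) (f : R4) : dg c (r • f) = r • dg c f := by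
  funext d; show c d * (r * f d) = r * (c d * f d); ring

lemma dg_mm (c : (Fin 4 →₀ ℕ) → ℝ) (e : Fin 4 →₀ ℕ) (f : R4) :
    dg c (mm e f) = mm e (dg (fun d => c (d + e)) f) := by
  funext d
  show c d * (if e ≤ d then f (d - e) else 0) = if e ≤ d then c (d - e + e) * f (d - e) else 0
  split_ifs with h
  · rw [tsub_add_cancel_of_le h]
  · ring

lemma dg_dg (c c' : (Fin 4 →₀ ℕ) → ℝ) (f : R4) :
    dg c (dg c' f) = dg (fun d => c d * c' d) f := by
  funext d; show c d * (c' d * f d) = (c d * c' d) * f d; ring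

lemma dg_sum {ι : Type*} (s : Finset ι) (g : ι → R4) (c : (Fin 4 →₀ ℕ) → ℝ) :
    dg c (∑ i ∈ s, g i) = ∑ i ∈ s, dg c (g i) := by
  funext d
  show c d * ((∑ i ∈ s, g i) d) = (∑ i ∈ s, dg c (g i)) d
  rw [show (∑ i ∈ s, g i) d = ∑ i ∈ s, g i d from Finset.sum_apply _ _ _,
    show (∑ i ∈ s, dg c (g i)) d = ∑ i ∈ s, dg c (g i) d from Finset.sum_apply _ _ _, Finset.mul_sum]
  exact Finset.sum_congr rfl fun i _ => rfl

lemma DtDw_iter (m : ℕ) (f : R4) :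
    DtDw^[m] f = dg (fun d => ((d 0 : ℝ) - d 3) ^ m) f := by
  induction m with
  | zero => funext d; show f d = 1 * f d; ring
  | succ m ih =>
      rw [Function.iterate_succ_apply', ih]
      funext d
      show (d 0 : ℝ) * (((d 0:ℝ) - d 3) ^ m * f d) - (d 3 : ℝ) * (((d 0:ℝ) - d 3) ^ m * f d)
        = ((d 0:ℝ) - d 3) ^ (m+1) * f d
      ring

lemma DtDb_iter_dg (j : ℕ) (c : (Fin 4 →₀ ℕ) → ℝ) (f : R4) :
    DtDb^[j] (dg c f) = dg (fun d => ((d 0 : ℝ) - d 2) ^ j * c d) f := by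
  induction j with
  | zero => funext d; show c d * f d = (1 * c d) * f d; ring
  | succ j ih =>
      rw [Function.iterate_succ_apply', ih]
      funext d
      show (d 0 : ℝ) * ((((d 0:ℝ) - d 2) ^ j * c d) * f d)
          - (d 2 : ℝ) * ((((d 0:ℝ) - d 2) ^ j * c d) * f d)
        = (((d 0:ℝ) - d 2) ^ (j+1) * c d) * f d
      ring

lemma iter_eq (k j : ℕ) (f : R4) : DtDb^[j] (DtDw^[k - j] f) = dg (P k j) f := by
  rw [DtDw_iter, DtDb_iter_dg]
  rfl

/-! ### membership lemmas -/

lemma A_zero : (0 : R4) ∈ A := by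
  intro d; simp

lemma A_add {f g : R4} (hf : f ∈ A) (hg : g ∈ A) : f + g ∈ A := by
  intro d
  have h1 := hf d; have h2 := hg d
  simp only [MvPowerSeries.coeff_apply] at h1 h2 ⊢
  have hadd : (f + g) d = f d + g d := rfl
  rw [hadd]
  constructor
  · exact add_nonneg h1.1 h2.1
  · intro hne
    by_cases h : f d = 0
    · apply h2.2
      intro h'
      exact hne (by rw [h, h', add_zero])
    · exact h1.2 h

lemma A_sum {ι : Type*} (s : Finset ι) (g : ι → R4) (h : ∀ i ∈ s, g i ∈ A) :
    (∑ i ∈ s, g i) ∈ A :=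
  Finset.sum_induction g (· ∈ A) (fun _ _ ha hb => A_add ha hb) A_zero h

lemma A_smul {f : R4} {c : ℝ} (hc : 0 ≤ c) (hf : f ∈ A) : c • f ∈ A := by
  intro d
  have h1 := hf d
  simp only [MvPowerSeries.coeff_apply] at h1 ⊢
  have hs : (c • f) d = c * f d := rfl
  rw [hs]
  exact ⟨mul_nonneg hc h1.1, fun h => h1.2 (right_ne_zero_of_mul h)⟩

lemma A_mm {f : R4} (e : Fin 4 →₀ ℕ) (he : e 2 + e 3 ≤ e 0) (hf : f ∈ A) : mm e f ∈ A := by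
  intro d
  simp only [MvPowerSeries.coeff_apply]
  by_cases h : e ≤ d
  · have hd : mm e f d = f (d - e) := if_pos h
    rw [hd]
    have h1 := hf (d - e)
    simp only [MvPowerSeries.coeff_apply] at h1
    refine ⟨h1.1, fun hne => ?_⟩
    have h3 := h1.2 hne
    rw [Finsupp.le_def] at h
    have i0 := h 0; have i2 := h 2; have i3 := h 3
    rw [Finsupp.tsub_apply, Finsupp.tsub_apply, Finsupp.tsub_apply] at h3
    omega
  · have hd : mm e f d = 0 := if_neg h
    rw [hd]; simp

lemma A_dg {f : R4} {c : (Fin 4 →₀ ℕ) → ℝ}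
    (hc : ∀ d : Fin 4 →₀ ℕ, d 2 + d 3 ≤ d 0 → 0 ≤ c d) (hf : f ∈ A) : dg c f ∈ A := by
  intro d
  have h1 := hf d
  simp only [MvPowerSeries.coeff_apply] at h1 ⊢
  have hs : dg c f d = c d * f d := rfl
  rw [hs]
  constructor
  · by_cases h : f d = 0
    · rw [h, mul_zero]
    · exact mul_nonneg (hc d (h1.2 h)) h1.1
  · intro hne
    exact h1.2 (right_ne_zero_of_mul hne)

lemma P_nonneg (k j : ℕ) : ∀ d : Fin 4 →₀ ℕ, d 2 + d 3 ≤ d 0 → 0 ≤ P k j d := by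
  intro d hd
  have h1 : (d 2 : ℝ) ≤ (d 0 : ℝ) := Nat.cast_le.mpr (by omega)
  have h2 : (d 3 : ℝ) ≤ (d 0 : ℝ) := Nat.cast_le.mpr (by omega)
  exact mul_nonneg (pow_nonneg (by linarith) _) (pow_nonneg (by linarith) _)

lemma E_apply0 (k j : ℕ) : E k j 0 = 2*k := by
  simp [E, Finsupp.add_apply, Finsupp.single_apply]
lemma E_apply2 (k j : ℕ) : E k j 2 = k - j := by
  simp [E, Finsupp.add_apply, Finsupp.single_apply]
lemma E_apply3 (k j : ℕ) : E k j 3 = 2*j := by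
  simp [E, Finsupp.add_apply, Finsupp.single_apply]

lemma E_cond (k j : ℕ) (hj : j ≤ k) : E k j 2 + E k j 3 ≤ E k j 0 := by
  rw [E_apply0, E_apply2, E_apply3]; omega

lemma A_MEP {f : R4} (k j a b : ℕ) (hj : j ≤ k) (hf : f ∈ A) :
    mm (E k j) (dg (P a b) f) ∈ A :=
  A_mm _ (E_cond k j hj) (A_dg (P_nonneg a b) hf)

/-! ### normal form of Theta -/

lemma Theta_eq (k : ℕ) (f : R4) :
    Theta k f = ∑ j ∈ Finset.range (k+1),
      ((2:ℝ)^k * (k.choose j : ℝ)) • mm (E k j) (dg (P k j) f) := by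
  unfold Theta
  rw [Finset.mul_sum, Finset.smul_sum]
  apply Finset.sum_congr rfl
  intro j _
  rw [iter_eq k j f, mul_smul_comm, smul_smul]
  congr 1
  rw [mul_assoc]
  show (MvPowerSeries.X 0 : R4) ^ (2*k) *
      ((MvPowerSeries.X 3 : R4) ^ (2*j) * ((MvPowerSeries.X 2 : R4) ^ (k-j) * dg (P k j) f)) = _
  rw [X_pow_mul, X_pow_mul, X_pow_mul, mm_mm, mm_mm, add_assoc]
  rfl

lemma Theta_memA (k : ℕ) {f : R4} (hf : f ∈ A) : Theta k f ∈ A := by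
  rw [Theta_eq]
  apply A_sum
  intro j hj
  have hj' : j ≤ k := by have := Finset.mem_range.mp hj; omega
  exact A_smul (by positivity) (A_MEP k j k j hj' hf)

/-! ### commutation / branch lemmas -/

lemma E_addW (k j : ℕ) (hj : j ≤ k) : E 1 0 + E k j = E (k+1) j := by
  ext a
  simp only [E, Finsupp.add_apply, Finsupp.single_apply]
  split_ifs <;> omega

lemma E_addB (k j : ℕ) : E 1 1 + E k j = E (k+1) (j+1) := by
  ext a
  simp only [E, Finsupp.add_apply, Finsupp.single_apply]
  split_ifs <;> omega

lemma keyW (k j : ℕ) (hj : j ≤ k) (d : Fin 4 →₀ ℕ) :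
    P 1 0 (d + E k j) * P k j d = P (k+1) j d + ((2*(k-j) : ℕ) : ℝ) * P k j d := by
  obtain ⟨m, rfl⟩ : ∃ m, k = j + m := ⟨k - j, by omega⟩
  have e0 : (d + E (j+m) j) 0 = d 0 + 2*(j+m) := by
    simp [E, Finsupp.add_apply, Finsupp.single_apply]
  have e2 : (d + E (j+m) j) 2 = d 2 + m := by
    simp [E, Finsupp.add_apply, Finsupp.single_apply]
  have e3 : (d + E (j+m) j) 3 = d 3 + 2*j := by
    simp [E, Finsupp.add_apply, Finsupp.single_apply]
  have h1 : j + m - j = m := by omega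
  have h2 : j + m + 1 - j = m + 1 := by omega
  have h3 : 2*(j + m - j) = 2*m := by omega
  simp only [P, e0, e2, e3, h1, h2, h3, pow_zero, pow_one, one_mul, Nat.sub_zero]
  push_cast
  ring

lemma keyB (k j : ℕ) (hj : j ≤ k) (d : Fin 4 →₀ ℕ) :
    P 1 1 (d + E k j) * P k j d = P (k+1) (j+1) d + ((k + j : ℕ) : ℝ) * P k j d := by
  obtain ⟨m, rfl⟩ : ∃ m, k = j + m := ⟨k - j, by omega⟩
  have e0 : (d + E (j+m) j) 0 = d 0 + 2*(j+m) := by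
    simp [E, Finsupp.add_apply, Finsupp.single_apply]
  have e2 : (d + E (j+m) j) 2 = d 2 + m := by
    simp [E, Finsupp.add_apply, Finsupp.single_apply]
  have e3 : (d + E (j+m) j) 3 = d 3 + 2*j := by
    simp [E, Finsupp.add_apply, Finsupp.single_apply]
  have h1 : j + m - j = m := by omega
  have h2 : j + m + 1 - (j + 1) = m := by omega
  simp only [P, e0, e2, e3, h1, h2, pow_zero, pow_one, one_mul, mul_one, Nat.sub_self]
  push_cast
  ring

lemma branchW (k j : ℕ) (hj : j ≤ k) (f : R4) :
    mm (E 1 0) (dg (P 1 0) (mm (E k j) (dg (P k j) f)))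
      = mm (E (k+1) j) (dg (P (k+1) j) f)
        + ((2*(k-j) : ℕ) : ℝ) • mm (E (k+1) j) (dg (P k j) f) := by
  rw [dg_mm, mm_mm, dg_dg, E_addW k j hj, ← mm_smul, ← mm_add]
  have inner : dg (fun d => P 1 0 (d + E k j) * P k j d) f
      = dg (P (k+1) j) f + ((2*(k-j) : ℕ) : ℝ) • dg (P k j) f := by
    funext d
    show (P 1 0 (d + E k j) * P k j d) * f d
      = P (k+1) j d * f d + ((2*(k-j) : ℕ) : ℝ) * (P k j d * f d)
    rw [keyW k j hj d]
    ring
  rw [inner]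

lemma branchB (k j : ℕ) (hj : j ≤ k) (f : R4) :
    mm (E 1 1) (dg (P 1 1) (mm (E k j) (dg (P k j) f)))
      = mm (E (k+1) (j+1)) (dg (P (k+1) (j+1)) f)
        + ((k + j : ℕ) : ℝ) • mm (E (k+1) (j+1)) (dg (P k j) f) := by
  rw [dg_mm, mm_mm, dg_dg, E_addB k j, ← mm_smul, ← mm_add]
  have inner : dg (fun d => P 1 1 (d + E k j) * P k j d) f
      = dg (P (k+1) (j+1)) f + ((k + j : ℕ) : ℝ) • dg (P k j) f := by
    funext d
    show (P 1 1 (d + E k j) * P k j d) * f d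
      = P (k+1) (j+1) d * f d + ((k + j : ℕ) : ℝ) * (P k j d * f d)
    rw [keyB k j hj d]
    ring
  rw [inner]

/-! ### Pascal -/

lemma pascal (n : ℕ) (y : ℕ → R4) :
    ∑ i ∈ Finset.range (n+2), ((2:ℝ)^(n+1) * ((n+1).choose i : ℝ)) • y i
      = ∑ j ∈ Finset.range (n+1), ((2:ℝ)^(n+1) * (n.choose j : ℝ)) • y j
        + ∑ j ∈ Finset.range (n+1), ((2:ℝ)^(n+1) * (n.choose j : ℝ)) • y (j+1) := by
  rw [Finset.sum_range_succ' (fun i => ((2:ℝ)^(n+1) * ((n+1).choose i : ℝ)) • y i) (n+1),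
    Finset.sum_range_succ' (fun j => ((2:ℝ)^(n+1) * (n.choose j : ℝ)) • y j) n,
    Finset.sum_range_succ (fun j => ((2:ℝ)^(n+1) * (n.choose j : ℝ)) • y (j+1)) n]
  simp only [Nat.choose_succ_succ, Nat.cast_add, mul_add, add_smul, Finset.sum_add_distrib,
    Nat.choose_zero_right, Nat.cast_one, Nat.choose_self, Nat.choose_succ_self, Nat.cast_zero,
    mul_zero, zero_smul, mul_one, add_zero, Finset.sum_range_succ, Nat.succ_eq_add_one]
  abel

/-! ### the core commutation computation -/

lemma core (k : ℕ) (f : R4) :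
    Theta 1 (Theta k f)
      = Theta (k+1) f
        + ∑ j ∈ Finset.range (k+1),
            (((2:ℝ)^(k+1) * (k.choose j : ℝ)) * ((2*(k-j) : ℕ) : ℝ)) •
              mm (E (k+1) j) (dg (P k j) f)
        + ∑ j ∈ Finset.range (k+1),
            (((2:ℝ)^(k+1) * (k.choose j : ℝ)) * ((k + j : ℕ) : ℝ)) •
              mm (E (k+1) (j+1)) (dg (P k j) f) := by
  have hT1 : ∀ g : R4, Theta 1 g
      = (2:ℝ) • mm (E 1 0) (dg (P 1 0) g) + (2:ℝ) • mm (E 1 1) (dg (P 1 1) g) := by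
    intro g
    rw [Theta_eq]
    rw [Finset.sum_range_succ, Finset.sum_range_succ, Finset.sum_range_zero, zero_add]
    norm_num
  have hW : mm (E 1 0) (dg (P 1 0) (Theta k f))
      = ∑ j ∈ Finset.range (k+1),
          ((2:ℝ)^k * (k.choose j : ℝ)) • mm (E (k+1) j) (dg (P (k+1) j) f)
        + ∑ j ∈ Finset.range (k+1),
          (((2:ℝ)^k * (k.choose j : ℝ)) * ((2*(k-j) : ℕ) : ℝ)) •
            mm (E (k+1) j) (dg (P k j) f) := by
    rw [Theta_eq k, dg_sum, mm_sum, ← Finset.sum_add_distrib]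
    apply Finset.sum_congr rfl
    intro j hj
    have hj' : j ≤ k := by have := Finset.mem_range.mp hj; omega
    rw [dg_smul, mm_smul, branchW k j hj', smul_add, smul_smul]
  have hB : mm (E 1 1) (dg (P 1 1) (Theta k f))
      = ∑ j ∈ Finset.range (k+1),
          ((2:ℝ)^k * (k.choose j : ℝ)) • mm (E (k+1) (j+1)) (dg (P (k+1) (j+1)) f)
        + ∑ j ∈ Finset.range (k+1),
          (((2:ℝ)^k * (k.choose j : ℝ)) * ((k + j : ℕ) : ℝ)) •
            mm (E (k+1) (j+1)) (dg (P k j) f) := by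
    rw [Theta_eq k, dg_sum, mm_sum, ← Finset.sum_add_distrib]
    apply Finset.sum_congr rfl
    intro j hj
    have hj' : j ≤ k := by have := Finset.mem_range.mp hj; omega
    rw [dg_smul, mm_smul, branchB k j hj', smul_add, smul_smul]
  have norm1 : ∀ z : ℕ → R4,
      (2:ℝ) • (∑ j ∈ Finset.range (k+1), ((2:ℝ)^k * (k.choose j : ℝ)) • z j)
        = ∑ j ∈ Finset.range (k+1), ((2:ℝ)^(k+1) * (k.choose j : ℝ)) • z j := by
    intro z
    rw [Finset.smul_sum]
    refine Finset.sum_congr rfl fun j _ => ?_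
    rw [smul_smul]
    congr 1
    ring
  have norm2 : ∀ (z : ℕ → R4) (r : ℕ → ℝ),
      (2:ℝ) • (∑ j ∈ Finset.range (k+1), (((2:ℝ)^k * (k.choose j : ℝ)) * r j) • z j)
        = ∑ j ∈ Finset.range (k+1), (((2:ℝ)^(k+1) * (k.choose j : ℝ)) * r j) • z j := by
    intro z r
    rw [Finset.smul_sum]
    refine Finset.sum_congr rfl fun j _ => ?_
    rw [smul_smul]
    congr 1
    ring
  rw [hT1 (Theta k f), hW, hB, Theta_eq (k+1), smul_add, smul_add, norm1, norm1, norm2, norm2,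
    pascal k (fun i => mm (E (k+1) i) (dg (P (k+1) i) f))]
  abel

/-! ### decomposition of Λ -/

lemma B_pb (f : R4) : B * pb f = Db f := by
  rw [show B = MvPowerSeries.X 2 from rfl, X_mul]
  funext d
  show (if Finsupp.single 2 1 ≤ d then pb f (d - Finsupp.single 2 1) else 0) = (d 2 : ℝ) * f d
  by_cases h : (Finsupp.single 2 1 : Fin 4 →₀ ℕ) ≤ d
  · rw [if_pos h]
    have h2 : 1 ≤ d 2 := by
      have := Finsupp.le_def.mp h 2
      simpa [Finsupp.single_apply] using this
    have hv : pb f (d - Finsupp.single 2 1)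
        = (((d - Finsupp.single 2 1 : Fin 4 →₀ ℕ) 2 : ℕ) + 1 : ℝ) *
            f (d - Finsupp.single 2 1 + Finsupp.single 2 1) := rfl
    rw [hv, tsub_add_cancel_of_le h]
    have hc : ((d - Finsupp.single 2 1 : Fin 4 →₀ ℕ) 2 : ℕ) = d 2 - 1 := by
      rw [Finsupp.tsub_apply]; simp [Finsupp.single_apply]
    rw [hc]
    congr 1
    rw [Nat.cast_sub h2]
    ring
  · rw [if_neg h]
    have h2 : d 2 = 0 := by
      by_contra h2
      apply h
      rw [Finsupp.le_def]
      intro i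
      rw [Finsupp.single_apply]
      split_ifs with hi
      · subst hi; omega
      · exact Nat.zero_le _
    rw [h2]
    simp

lemma W_pw (f : R4) : W * pw f = Dw f := by
  rw [show W = MvPowerSeries.X 3 from rfl, X_mul]
  funext d
  show (if Finsupp.single 3 1 ≤ d then pw f (d - Finsupp.single 3 1) else 0) = (d 3 : ℝ) * f d
  by_cases h : (Finsupp.single 3 1 : Fin 4 →₀ ℕ) ≤ d
  · rw [if_pos h]
    have h2 : 1 ≤ d 3 := by
      have := Finsupp.le_def.mp h 3
      simpa [Finsupp.single_apply] using this
    have hv : pw f (d - Finsupp.single 3 1)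
        = (((d - Finsupp.single 3 1 : Fin 4 →₀ ℕ) 3 : ℕ) + 1 : ℝ) *
            f (d - Finsupp.single 3 1 + Finsupp.single 3 1) := rfl
    rw [hv, tsub_add_cancel_of_le h]
    have hc : ((d - Finsupp.single 3 1 : Fin 4 →₀ ℕ) 3 : ℕ) = d 3 - 1 := by
      rw [Finsupp.tsub_apply]; simp [Finsupp.single_apply]
    rw [hc]
    congr 1
    rw [Nat.cast_sub h2]
    ring
  · rw [if_neg h]
    have h2 : d 3 = 0 := by
      by_contra h2
      apply h
      rw [Finsupp.le_def]
      intro i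
      rw [Finsupp.single_apply]
      split_ifs with hi
      · subst hi; omega
      · exact Nat.zero_le _
    rw [h2]
    simp

lemma Theta_one (f : R4) :
    Theta 1 f = 2 * T^2 * (B * (Dt f - Dw f) + W^2 * (Dt f - Db f)) := by
  unfold Theta
  rw [Finset.sum_range_succ, Finset.sum_range_succ, Finset.sum_range_zero, zero_add]
  simp only [Function.iterate_one, Function.iterate_zero, id_eq, Nat.choose_self,
    Nat.choose_zero_right, Nat.cast_one, one_smul, Nat.sub_self, Nat.sub_zero, pow_one,
    Nat.mul_zero, Nat.mul_one, pow_zero, one_mul]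
  rw [show DtDw f = Dt f - Dw f from rfl, show DtDb f = Dt f - Db f from rfl]
  have h2 : ∀ x : R4, (2:ℝ) • x = x + x := fun x => two_smul ℝ x
  rw [h2]
  ring

lemma Lam_decomp (f : R4) : Lam f = Theta 1 f + 2 * T^2 * (W * pb f + pw f) := by
  have hb := B_pb f
  have hw := W_pw f
  rw [Theta_one]
  unfold Lam
  linear_combination (-(2*T^2*W^2)) * hb - (2*T^2*B) * hw

/-! ### membership for the remainder operator -/

lemma pb_memA {f : R4} (hf : f ∈ A) : pb f ∈ A := by
  intro d
  simp only [MvPowerSeries.coeff_apply]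
  have h1 := hf (d + Finsupp.single 2 1)
  simp only [MvPowerSeries.coeff_apply] at h1
  have hv : pb f d = ((d 2 : ℕ) + 1 : ℝ) * f (d + Finsupp.single 2 1) := rfl
  rw [hv]
  constructor
  · exact mul_nonneg (by positivity) h1.1
  · intro hne
    have h3 := h1.2 (right_ne_zero_of_mul hne)
    rw [Finsupp.add_apply, Finsupp.add_apply, Finsupp.add_apply, Finsupp.single_eq_same,
      Finsupp.single_eq_of_ne' (show (2 : Fin 4) ≠ 3 by decide),
      Finsupp.single_eq_of_ne' (show (2 : Fin 4) ≠ 0 by decide)] at h3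
    omega
lemma pw_memA {f : R4} (hf : f ∈ A) : pw f ∈ A := by
  intro d
  simp only [MvPowerSeries.coeff_apply]
  have h1 := hf (d + Finsupp.single 3 1)
  simp only [MvPowerSeries.coeff_apply] at h1
  have hv : pw f d = ((d 3 : ℕ) + 1 : ℝ) * f (d + Finsupp.single 3 1) := rfl
  rw [hv]
  constructor
  · exact mul_nonneg (by positivity) h1.1
  · intro hne
    have h3 := h1.2 (right_ne_zero_of_mul hne)
    rw [Finsupp.add_apply, Finsupp.add_apply, Finsupp.add_apply, Finsupp.single_eq_same,
      Finsupp.single_eq_of_ne' (show (3 : Fin 4) ≠ 2 by decide),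
      Finsupp.single_eq_of_ne' (show (3 : Fin 4) ≠ 0 by decide)] at h3
    omega

lemma rest_memA {f : R4} (hf : f ∈ A) : 2 * T^2 * (W * pb f + pw f) ∈ A := by
  have key : T^2 * (W * pb f + pw f)
      = mm (Finsupp.single 0 2 + Finsupp.single 3 1) (pb f)
        + mm (Finsupp.single 0 2) (pw f) := by
    rw [show W = MvPowerSeries.X 3 from rfl, X_mul, show T = MvPowerSeries.X 0 from rfl,
      X_pow_mul, mm_add, mm_mm]
  have h2 : 2 * T^2 * (W * pb f + pw f)
      = T^2 * (W * pb f + pw f) + T^2 * (W * pb f + pw f) := by ring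
  have m1 : mm (Finsupp.single 0 2 + Finsupp.single 3 1) (pb f) ∈ A := by
    apply A_mm _ _ (pb_memA hf)
    simp [Finsupp.add_apply, Finsupp.single_apply]
  have m2 : mm (Finsupp.single 0 2) (pw f) ∈ A := by
    apply A_mm _ _ (pw_memA hf)
    simp [Finsupp.single_apply]
  rw [h2, key]
  exact A_add (A_add m1 m2) (A_add m1 m2)

lemma Lam_memA {f : R4} (hf : f ∈ A) : Lam f ∈ A := by
  rw [Lam_decomp]
  exact A_add (Theta_memA 1 hf) (rest_memA hf)

/-! ### additivity of Λ -/

lemma Dt_add (f g : R4) : Dt (f + g) = Dt f + Dt g := by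
  funext d; show (d 0 : ℝ) * (f d + g d) = (d 0 : ℝ) * f d + (d 0 : ℝ) * g d; ring
lemma pb_add (f g : R4) : pb (f + g) = pb f + pb g := by
  funext d
  show ((d 2 : ℕ) + 1 : ℝ) * (f (d + Finsupp.single 2 1) + g (d + Finsupp.single 2 1))
    = ((d 2 : ℕ) + 1 : ℝ) * f (d + Finsupp.single 2 1)
      + ((d 2 : ℕ) + 1 : ℝ) * g (d + Finsupp.single 2 1)
  ring
lemma pw_add (f g : R4) : pw (f + g) = pw f + pw g := by
  funext d
  show ((d 3 : ℕ) + 1 : ℝ) * (f (d + Finsupp.single 3 1) + g (d + Finsupp.single 3 1))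
    = ((d 3 : ℕ) + 1 : ℝ) * f (d + Finsupp.single 3 1)
      + ((d 3 : ℕ) + 1 : ℝ) * g (d + Finsupp.single 3 1)
  ring

lemma Lam_add (f g : R4) : Lam (f + g) = Lam f + Lam g := by
  unfold Lam
  rw [Dt_add, pb_add, pw_add]
  ring


/-- for every k ≥ 1,
Λ^k ⪰ 2^k t^{2k} Σ_j C(k,j) ν_w^{2j} ν_b^{k−j} (D_t−D_b)^j (D_t−D_w)^{k−j} ⪰ 0. -/
theorem stmt_6 (k : ℕ) (hk : 1 ≤ k) :
    (∀ f ∈ A, Lam^[k] f - Theta k f ∈ A) ∧ (∀ f ∈ A, Theta k f ∈ A) := by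
  refine ⟨?_, fun f hf => Theta_memA k hf⟩
  induction k, hk using Nat.le_induction with
  | base =>
      intro f hf
      have h : Lam^[1] f - Theta 1 f = 2 * T^2 * (W * pb f + pw f) := by
        rw [Function.iterate_one, Lam_decomp]
        ring
      rw [h]
      exact rest_memA hf
  | succ n hn ih =>
      intro f hf
      set g : R4 := Lam^[n] f - Theta n f with hgdef
      have hg : g ∈ A := ih f hf
      have hsplit : Lam^[n] f = Theta n f + g := by rw [hgdef]; ring
      have h1 : Lam^[n+1] f = Lam (Theta n f) + Lam g := by
        rw [Function.iterate_succ_apply', hsplit, Lam_add]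
      have h4 : Lam^[n+1] f - Theta (n+1) f
          = (∑ j ∈ Finset.range (n+1),
              (((2:ℝ)^(n+1) * (n.choose j : ℝ)) * ((2*(n-j) : ℕ) : ℝ)) •
                mm (E (n+1) j) (dg (P n j) f))
            + (∑ j ∈ Finset.range (n+1),
              (((2:ℝ)^(n+1) * (n.choose j : ℝ)) * ((n + j : ℕ) : ℝ)) •
                mm (E (n+1) (j+1)) (dg (P n j) f))
            + 2 * T^2 * (W * pb (Theta n f) + pw (Theta n f))
            + Lam g := by
        rw [h1, Lam_decomp (Theta n f), core n f]
        ring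
      rw [h4]
      have hExW : (∑ j ∈ Finset.range (n+1),
          (((2:ℝ)^(n+1) * (n.choose j : ℝ)) * ((2*(n-j) : ℕ) : ℝ)) •
            mm (E (n+1) j) (dg (P n j) f)) ∈ A := by
        apply A_sum
        intro j hj
        have hj' : j ≤ n := by have := Finset.mem_range.mp hj; omega
        exact A_smul (by positivity) (A_MEP (n+1) j n j (by omega) hf)
      have hExB : (∑ j ∈ Finset.range (n+1),
          (((2:ℝ)^(n+1) * (n.choose j : ℝ)) * ((n + j : ℕ) : ℝ)) •
            mm (E (n+1) (j+1)) (dg (P n j) f)) ∈ A := by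
        apply A_sum
        intro j hj
        have hj' : j ≤ n := by have := Finset.mem_range.mp hj; omega
        exact A_smul (by positivity) (A_MEP (n+1) (j+1) n j (by omega) hf)
      exact A_add (A_add (A_add hExW hExB) (rest_memA (Theta_memA n hf))) (Lam_memA hg)

end Stmt6
end
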